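/- Fix θ ∈ ℝ, σ > 0, α ∈ (0, 0.4), and for u ∈ ℝ, s > 0, t ∈ (0,1) define U_{u,s}(t) = Φ̄( (s/σ)·Φ̄^{−1}(t) + (u−θ)/σ ). There is a universal constant c > 0 such that for all x, y ≥ 0 and all t_0 ∈ (0, α), if (x/σ)·√(2 log(1/t_0)) + (y/σ)·2 log(1/t_0) ≤ 0.05, then max over t ∈ [t_0, α] of ( U_{θ−x, σ−y}(t) − t ) / t is at most c·( (x/σ)·√(2 log(1/t_0)) + (y/σ)·2 log(1/t_0) ). -/

import Mathlib

open Real MeasureTheory Set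

/-- Standard normal density. -/
noncomputable def gphi (t : ℝ) : ℝ := (Real.sqrt (2 * Real.pi))⁻¹ * Real.exp (-(t ^ 2) / 2)

/-- Standard normal upper-tail (survival) function. -/
noncomputable def Phibar (t : ℝ) : ℝ := ∫ s in Set.Ioi t, gphi s

/-- Inverse of the standard normal upper-tail function. -/
noncomputable def PhibarInv (x : ℝ) : ℝ := Function.invFun Phibar x

/-- The rescaling map $U_{u,s}(t)$ of the corrected $p$-values. -/
noncomputable def Umap (θ σ u s t : ℝ) : ℝ :=
  Phibar ((s / σ) * PhibarInv t + (u - θ) / σ)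

namespace RNB

lemma sqrt2pi_pos : (0:ℝ) < Real.sqrt (2 * Real.pi) := Real.sqrt_pos.mpr (by positivity)

lemma sqrt2pi_ge : (2.5:ℝ) ≤ Real.sqrt (2 * Real.pi) := by
  rw [show (2.5:ℝ) = Real.sqrt (2.5 ^ 2) from (Real.sqrt_sq (by norm_num)).symm]
  apply Real.sqrt_le_sqrt
  nlinarith [Real.pi_gt_d6]

lemma sqrt2pi_inv_le : (Real.sqrt (2 * Real.pi))⁻¹ ≤ 0.4 := by
  have h := one_div_le_one_div_of_le (by norm_num : (0:ℝ) < 2.5) sqrt2pi_ge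
  rw [inv_eq_one_div]
  calc 1 / Real.sqrt (2 * Real.pi) ≤ 1 / 2.5 := h
  _ = 0.4 := by norm_num

lemma gphi_pos (x : ℝ) : 0 < gphi x :=
  mul_pos (inv_pos.mpr sqrt2pi_pos) (Real.exp_pos _)

lemma gphi_le (x : ℝ) : gphi x ≤ (Real.sqrt (2 * Real.pi))⁻¹ := by
  unfold gphi
  nth_rewrite 2 [← mul_one ((Real.sqrt (2 * Real.pi))⁻¹)]
  apply mul_le_mul_of_nonneg_left _ (inv_pos.mpr sqrt2pi_pos).le
  rw [Real.exp_le_one_iff]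
  nlinarith [sq_nonneg x]

lemma gphi_le_one (x : ℝ) : gphi x ≤ 1 :=
  (gphi_le x).trans (by linarith [sqrt2pi_inv_le])

lemma gphi_anti {a b : ℝ} (ha : 0 ≤ a) (hab : a ≤ b) : gphi b ≤ gphi a := by
  unfold gphi
  apply mul_le_mul_of_nonneg_left _ (inv_pos.mpr sqrt2pi_pos).le
  apply Real.exp_le_exp.mpr
  nlinarith

lemma gphi_even (x : ℝ) : gphi (-x) = gphi x := by
  unfold gphi; ring_nf

lemma gphi_integrable : Integrable gphi := by
  have h : gphi = fun x => (Real.sqrt (2 * Real.pi))⁻¹ * Real.exp (-(2⁻¹:ℝ) * x ^ 2) := by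
    funext x; unfold gphi; congr 1; ring
  rw [h]
  exact (integrable_exp_neg_mul_sq (by norm_num)).const_mul _

lemma integral_gphi : ∫ x, gphi x = 1 := by
  have h1 : ∀ x : ℝ, gphi x = (Real.sqrt (2 * Real.pi))⁻¹ * Real.exp (-(2⁻¹:ℝ) * x ^ 2) := by
    intro x; unfold gphi; congr 1; ring
  simp_rw [h1]
  rw [MeasureTheory.integral_const_mul, integral_gaussian,
    show Real.pi / (2⁻¹:ℝ) = 2 * Real.pi by ring]
  exact inv_mul_cancel₀ (ne_of_gt sqrt2pi_pos)

lemma Phibar_split {a b : ℝ} (h : a ≤ b) :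
    Phibar a = (∫ x in Ioc a b, gphi x) + Phibar b := by
  unfold Phibar
  rw [← setIntegral_union Ioc_disjoint_Ioi_same measurableSet_Ioi
    gphi_integrable.integrableOn gphi_integrable.integrableOn, Ioc_union_Ioi_eq_Ioi h]

lemma Ioc_nonneg (a b : ℝ) : 0 ≤ ∫ x in Ioc a b, gphi x :=
  setIntegral_nonneg measurableSet_Ioc fun x _ => (gphi_pos x).le

lemma Phibar_nonneg (a : ℝ) : 0 ≤ Phibar a :=
  setIntegral_nonneg measurableSet_Ioi fun x _ => (gphi_pos x).le

lemma Ioc_le {a b M : ℝ} (h : a ≤ b) (hM : ∀ x ∈ Ioc a b, gphi x ≤ M) :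
    ∫ x in Ioc a b, gphi x ≤ (b - a) * M := by
  have h2 : ∫ x in Ioc a b, gphi x ≤ ∫ _x in Ioc a b, M :=
    setIntegral_mono_on gphi_integrable.integrableOn
      ((integrableOn_const_iff).mpr (Or.inr measure_Ioc_lt_top)) measurableSet_Ioc hM
  rw [setIntegral_const, smul_eq_mul, Real.volume_real_Ioc,
    max_eq_left (sub_nonneg.mpr h)] at h2
  exact h2

lemma Ioc_ge {a b m : ℝ} (h : a ≤ b) (hm : ∀ x ∈ Ioc a b, m ≤ gphi x) :
    (b - a) * m ≤ ∫ x in Ioc a b, gphi x := by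
  have h2 : ∫ _x in Ioc a b, m ≤ ∫ x in Ioc a b, gphi x :=
    setIntegral_mono_on ((integrableOn_const_iff).mpr (Or.inr measure_Ioc_lt_top))
      gphi_integrable.integrableOn measurableSet_Ioc hm
  rw [setIntegral_const, smul_eq_mul, Real.volume_real_Ioc,
    max_eq_left (sub_nonneg.mpr h)] at h2
  exact h2

lemma Phibar_anti : Antitone Phibar := fun a b h => by
  rw [Phibar_split h]
  linarith [Ioc_nonneg a b]

lemma Phibar_cont : Continuous Phibar := by
  have L : LipschitzWith 1 Phibar := by
    apply LipschitzWith.of_dist_le_mul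
    intro a b
    wlog hab : b ≤ a generalizing a b
    · rw [dist_comm a b, dist_comm (Phibar a)]
      exact this b a (le_of_not_ge hab)
    rw [Real.dist_eq, Real.dist_eq, NNReal.coe_one, one_mul]
    have h1 := Phibar_split hab
    have h2 := Ioc_nonneg b a
    have h3 := Ioc_le hab (fun x _ => gphi_le_one x)
    rw [abs_sub_comm (Phibar a), abs_of_nonneg (by linarith : (0:ℝ) ≤ Phibar b - Phibar a),
      abs_of_nonneg (by linarith : (0:ℝ) ≤ a - b)]
    linarith
  exact L.continuous

lemma Iic_eq (a : ℝ) : ∫ x in Iic a, gphi x = Phibar (-a) := by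
  have h := integral_comp_neg_Iic a gphi
  simp_rw [gphi_even] at h
  exact h

lemma Phibar_neg_add (a : ℝ) : Phibar (-a) + Phibar a = 1 := by
  have h := intervalIntegral.integral_Iic_add_Ioi (b := a) (μ := (volume : Measure ℝ))
    gphi_integrable.integrableOn gphi_integrable.integrableOn
  have h2 : ∫ x in Ioi a, gphi x = Phibar a := rfl
  rw [Iic_eq, h2, integral_gphi] at h
  exact h

lemma Phibar_zero : Phibar 0 = 1 / 2 := by
  have h := Phibar_neg_add 0
  rw [neg_zero] at h
  linarith

lemma Phibar_upper {a : ℝ} (ha : 1 ≤ a) : Phibar a ≤ 0.4 * Real.exp (-(a ^ 2) / 2) := by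
  have ha0 : 0 < a := lt_of_lt_of_le one_pos ha
  have key : ∀ x ∈ Ioi a, gphi x ≤ (gphi a * Real.exp (a ^ 2)) * Real.exp (-a * x) := by
    intro x hx
    have hx' : a ≤ x := le_of_lt hx
    unfold gphi
    rw [mul_assoc, mul_assoc, ← Real.exp_add, ← Real.exp_add]
    apply mul_le_mul_of_nonneg_left _ (inv_pos.mpr sqrt2pi_pos).le
    apply Real.exp_le_exp.mpr
    nlinarith [sq_nonneg (a - x)]
  have hint : IntegrableOn (fun x => (gphi a * Real.exp (a ^ 2)) * Real.exp (-a * x)) (Ioi a) :=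
    (exp_neg_integrableOn_Ioi a ha0).const_mul _
  have h2 : Phibar a ≤ ∫ x in Ioi a, (gphi a * Real.exp (a ^ 2)) * Real.exp (-a * x) :=
    setIntegral_mono_on gphi_integrable.integrableOn hint measurableSet_Ioi key
  have h3 : ∫ x in Ioi a, Real.exp (-a * x) = a⁻¹ * Real.exp (-(a * a)) := by
    have h := MeasureTheory.integral_comp_mul_left_Ioi (fun y => Real.exp (-y)) a ha0
    simp only [smul_eq_mul] at h
    rw [integral_exp_neg_Ioi] at h
    simp_rw [show ∀ x : ℝ, -a * x = -(a * x) from fun x => by ring] at *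
    exact h
  rw [MeasureTheory.integral_const_mul, h3] at h2
  have h4 : Real.exp (a ^ 2) * Real.exp (-(a * a)) = 1 := by
    rw [← Real.exp_add, show a ^ 2 + -(a * a) = 0 by ring]
    exact Real.exp_zero
  have h5 : gphi a * Real.exp (a ^ 2) * (a⁻¹ * Real.exp (-(a * a))) = gphi a * a⁻¹ := by
    rw [show gphi a * Real.exp (a ^ 2) * (a⁻¹ * Real.exp (-(a * a)))
      = gphi a * a⁻¹ * (Real.exp (a ^ 2) * Real.exp (-(a * a))) from by ring, h4, mul_one]
  rw [h5] at h2
  have hinv : a⁻¹ ≤ 1 := by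
    rw [inv_eq_one_div, div_le_one ha0]; exact ha
  calc Phibar a ≤ gphi a * a⁻¹ := h2
  _ ≤ gphi a * 1 := mul_le_mul_of_nonneg_left hinv (gphi_pos a).le
  _ = (Real.sqrt (2 * Real.pi))⁻¹ * Real.exp (-(a ^ 2) / 2) := by rw [mul_one]; rfl
  _ ≤ 0.4 * Real.exp (-(a ^ 2) / 2) :=
      mul_le_mul_of_nonneg_right sqrt2pi_inv_le (Real.exp_pos _).le

lemma Phibar_max_le {t : ℝ} (h0 : 0 < t) (h1 : t < 1) :
    Phibar (max 1 (Real.sqrt (2 * Real.log (1 / t)))) ≤ t := by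
  set A := max 1 (Real.sqrt (2 * Real.log (1 / t))) with hA
  have hA1 : 1 ≤ A := le_max_left _ _
  have hlog : 0 ≤ 2 * Real.log (1 / t) := by
    have h : (1:ℝ) ≤ 1 / t := by rw [le_div_iff₀ h0]; linarith
    linarith [Real.log_nonneg h]
  have hA2 : 2 * Real.log (1 / t) ≤ A ^ 2 := by
    have hs := Real.sq_sqrt hlog
    have hle : Real.sqrt (2 * Real.log (1 / t)) ≤ A := le_max_right _ _
    nlinarith [Real.sqrt_nonneg (2 * Real.log (1 / t))]
  calc Phibar A ≤ 0.4 * Real.exp (-(A ^ 2) / 2) := Phibar_upper hA1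
  _ ≤ 1 * Real.exp (- Real.log (1 / t)) := by
      apply mul_le_mul (by norm_num) (Real.exp_le_exp.mpr (by linarith)) (Real.exp_pos _).le
        (by norm_num)
  _ = t := by
      rw [one_mul, Real.exp_neg, Real.exp_log (by positivity)]
      simp
  
lemma Phibar_surj {t : ℝ} (h0 : 0 < t) (h1 : t < 1) : ∃ a, Phibar a = t := by
  set A := max 1 (Real.sqrt (2 * Real.log (1 / t))) with hA
  set B := max 1 (Real.sqrt (2 * Real.log (1 / (1 - t)))) with hB
  have hA1 : 1 ≤ A := le_max_left _ _
  have hB1 : 1 ≤ B := le_max_left _ _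
  have upperA : Phibar A ≤ t := Phibar_max_le h0 h1
  have upperB : Phibar B ≤ 1 - t := Phibar_max_le (by linarith) (by linarith)
  have lowerB : t ≤ Phibar (-B) := by
    have := Phibar_neg_add B
    linarith
  have hAB : -B ≤ A := by linarith
  have hsub := intermediate_value_Icc' hAB Phibar_cont.continuousOn
  obtain ⟨a, _, ha⟩ := hsub ⟨upperA, lowerB⟩
  exact ⟨a, ha⟩

lemma Phibar_invFun {t : ℝ} (h0 : 0 < t) (h1 : t < 1) : Phibar (PhibarInv t) = t :=
  Function.invFun_eq (Phibar_surj h0 h1)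

lemma exp_half_le : Real.exp (1 / 2) ≤ 2.5 := by
  have h := Real.exp_one_lt_d9
  have h2 : Real.exp (1 / 2) * Real.exp (1 / 2) = Real.exp 1 := by
    rw [← Real.exp_add]; norm_num
  nlinarith [Real.exp_pos ((1:ℝ) / 2)]

lemma PhibarInv_le {t : ℝ} (h0 : 0 < t) (h1 : t < 0.4) :
    PhibarInv t ≤ Real.sqrt (2 * Real.log (1 / t)) := by
  set s := Real.sqrt (2 * Real.log (1 / t)) with hs
  have hlog : 1 / 2 ≤ Real.log (1 / t) := by
    rw [Real.le_log_iff_exp_le (by positivity)]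
    calc Real.exp (1 / 2) ≤ 2.5 := exp_half_le
    _ ≤ 1 / t := by rw [le_div_iff₀ h0]; linarith
  have hs1 : 1 ≤ s := by
    have h1 := Real.sq_sqrt (show (0:ℝ) ≤ 2 * Real.log (1 / t) by linarith)
    have h2 := Real.sqrt_nonneg (2 * Real.log (1 / t))
    rw [hs]
    nlinarith
  have hsq : s ^ 2 = 2 * Real.log (1 / t) := Real.sq_sqrt (by linarith)
  have hup : Phibar s ≤ 0.4 * t := by
    calc Phibar s ≤ 0.4 * Real.exp (-(s ^ 2) / 2) := Phibar_upper hs1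
    _ = 0.4 * t := by
        rw [hsq, show -(2 * Real.log (1 / t)) / 2 = - Real.log (1 / t) by ring,
          Real.exp_neg, Real.exp_log (by positivity)]
        simp
  by_contra hc
  push_neg at hc
  have := Phibar_anti hc.le
  rw [Phibar_invFun h0 (by linarith)] at this
  linarith

lemma Phibar_quarter : (0.4:ℝ) ≤ Phibar 0.25 := by
  have hsplit := Phibar_split (show (0:ℝ) ≤ 0.25 by norm_num)
  have hle := Ioc_le (show (0:ℝ) ≤ 0.25 by norm_num) (fun x _ => gphi_le x)
  rw [Phibar_zero] at hsplit
  have := sqrt2pi_inv_le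
  nlinarith [inv_pos.mpr sqrt2pi_pos]

lemma PhibarInv_gt {t : ℝ} (h0 : 0 < t) (ht : t < 0.4) : 0.25 < PhibarInv t := by
  by_contra hc
  push_neg at hc
  have h := Phibar_anti hc
  rw [Phibar_invFun h0 (by linarith)] at h
  linarith [Phibar_quarter]

lemma gphi_le_mul_Phibar {q : ℝ} (hq : 0.25 < q) : gphi q ≤ Real.exp 9 * q * Phibar q := by
  have hq0 : 0 < q := by linarith
  have hle : q ≤ q + 1 / q := by
    have : 0 < 1 / q := by positivity
    linarith
  have h1 : (∫ x in Ioc q (q + 1 / q), gphi x) ≤ Phibar q := by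
    rw [Phibar_split hle]
    linarith [Phibar_nonneg (q + 1 / q)]
  have h2 : (q + 1 / q - q) * gphi (q + 1 / q) ≤ ∫ x in Ioc q (q + 1 / q), gphi x :=
    Ioc_ge hle (fun x hx => gphi_anti (hq0.trans hx.1).le hx.2)
  have e1 : gphi q * Real.exp (-9) ≤ gphi (q + 1 / q) := by
    unfold gphi
    rw [mul_assoc, ← Real.exp_add]
    apply mul_le_mul_of_nonneg_left _ (inv_pos.mpr sqrt2pi_pos).le
    apply Real.exp_le_exp.mpr
    have hu : 1 / q ≤ 4 := by rw [div_le_iff₀ hq0]; linarith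
    have huq : q * (1 / q) = 1 := mul_one_div_cancel hq0.ne'
    nlinarith [one_div_pos.mpr hq0]
  have h3 : (1 / q) * (gphi q * Real.exp (-9)) ≤ Phibar q := by
    have e2 : q + 1 / q - q = 1 / q := by ring
    rw [e2] at h2
    have := mul_le_mul_of_nonneg_left e1 (one_div_pos.mpr hq0).le
    linarith
  have huq : q * (1 / q) = 1 := mul_one_div_cancel hq0.ne'
  have hexp : Real.exp 9 * Real.exp (-9) = 1 := by
    rw [← Real.exp_add]; norm_num
  have hmono := mul_le_mul_of_nonneg_left h3 (show (0:ℝ) ≤ Real.exp 9 * q from by positivity)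
  have key : Real.exp 9 * q * ((1 / q) * (gphi q * Real.exp (-9))) = gphi q := by
    rw [show Real.exp 9 * q * ((1 / q) * (gphi q * Real.exp (-9)))
      = (Real.exp 9 * Real.exp (-9)) * (q * (1 / q)) * gphi q from by ring, hexp, huq]
    ring
  calc gphi q = Real.exp 9 * q * ((1 / q) * (gphi q * Real.exp (-9))) := key.symm
  _ ≤ Real.exp 9 * q * Phibar q := hmono

end RNB

open RNB

theorem rescaled_null_bound :
    ∃ c : ℝ, 0 < c ∧
      ∀ (θ σ α : ℝ), 0 < σ → 0 < α → α < 0.4 →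
        ∀ (x y : ℝ), 0 ≤ x → 0 ≤ y →
          ∀ t₀ : ℝ, 0 < t₀ → t₀ < α →
            (x / σ) * Real.sqrt (2 * Real.log (1 / t₀)) +
                (y / σ) * (2 * Real.log (1 / t₀)) ≤ 0.05 →
              ∀ t ∈ Set.Icc t₀ α,
                (Umap θ σ (θ - x) (σ - y) t - t) / t ≤
                  c * ((x / σ) * Real.sqrt (2 * Real.log (1 / t₀)) +
                    (y / σ) * (2 * Real.log (1 / t₀))) := by
  refine ⟨Real.exp 10, Real.exp_pos 10, ?_⟩
  intro θ σ α hσ hα hα4 x y hx hy t₀ ht₀ ht₀α hcond t ht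
  obtain ⟨htl, htr⟩ := ht
  have ht0 : 0 < t := lt_of_lt_of_le ht₀ htl
  have ht4 : t < 0.4 := lt_of_le_of_lt htr hα4
  have ht1 : t < 1 := by linarith
  obtain ⟨L, hL⟩ : ∃ L', L' = Real.sqrt (2 * Real.log (1 / t₀)) := ⟨_, rfl⟩
  rw [← hL] at hcond ⊢
  obtain ⟨ε, hε⟩ : ∃ ε', ε' = (x / σ) * L + (y / σ) * (2 * Real.log (1 / t₀)) := ⟨_, rfl⟩
  rw [← hε] at hcond ⊢
  obtain ⟨q, hq⟩ : ∃ q', q' = PhibarInv t := ⟨_, rfl⟩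
  have hqt : Phibar q = t := by rw [hq]; exact Phibar_invFun ht0 ht1
  have hq14 : 0.25 < q := by rw [hq]; exact PhibarInv_gt ht0 ht4
  have hq0 : (0:ℝ) ≤ q := by linarith
  have hxσ : 0 ≤ x / σ := div_nonneg hx hσ.le
  have hyσ : 0 ≤ y / σ := div_nonneg hy hσ.le
  have hlog₀ : 0 ≤ 2 * Real.log (1 / t₀) := by
    have h : (1:ℝ) ≤ 1 / t₀ := by rw [le_div_iff₀ ht₀]; linarith
    linarith [Real.log_nonneg h]
  have hL2 : L ^ 2 = 2 * Real.log (1 / t₀) := by rw [hL]; exact Real.sq_sqrt hlog₀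
  have hqL : q ≤ L := by
    have h1 : q ≤ Real.sqrt (2 * Real.log (1 / t)) := by
      rw [hq]; exact PhibarInv_le ht0 ht4
    have h2 : Real.sqrt (2 * Real.log (1 / t)) ≤ L := by
      rw [hL]
      apply Real.sqrt_le_sqrt
      have := Real.log_le_log (by positivity : (0:ℝ) < 1 / t)
        (one_div_le_one_div_of_le ht₀ htl)
      linarith
    linarith
  obtain ⟨z, hz⟩ : ∃ z', z' = (y / σ) * q + x / σ := ⟨_, rfl⟩
  have hz0 : 0 ≤ z := by rw [hz]; exact add_nonneg (mul_nonneg hyσ hq0) hxσ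
  have hzq : z * q ≤ ε := by
    have hq2L2 : q * q ≤ L * L := mul_le_mul hqL hqL hq0 (hq0.trans hqL)
    have e1 : z * q = (y / σ) * (q * q) + (x / σ) * q := by rw [hz]; ring
    have e2 : ε = (x / σ) * L + (y / σ) * (L * L) := by rw [hε]; rw [← hL2]; ring
    rw [e1, e2]
    nlinarith [mul_nonneg hyσ (sub_nonneg.mpr hq2L2), mul_nonneg hxσ (sub_nonneg.mpr hqL)]
  have hε05 : ε ≤ 0.05 := hcond
  have hzq05 : z * q ≤ 0.05 := hzq.trans hε05
  have hzlt : z < q := by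
    by_contra hc
    push_neg at hc
    have h1 : q * q ≤ z * q := mul_le_mul_of_nonneg_right hc hq0
    nlinarith [sq_nonneg (q - 0.25)]
  have hwpos : 0 < q - z := by linarith
  have hU : Umap θ σ (θ - x) (σ - y) t = Phibar (q - z) := by
    unfold Umap
    have harg : (σ - y) / σ * PhibarInv t + (θ - x - θ) / σ = q - z := by
      rw [hz, hq]
      field_simp
      ring
    rw [harg]
  have hdiff : Phibar (q - z) - Phibar q ≤ z * gphi (q - z) := by
    have hle : q - z ≤ q := by linarith
    rw [Phibar_split hle]
    have h := Ioc_le hle (fun x hx => gphi_anti hwpos.le hx.1.le)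
    have h2 : (q - (q - z)) * gphi (q - z) = z * gphi (q - z) := by ring
    linarith
  have hgw : gphi (q - z) ≤ gphi q * Real.exp 0.05 := by
    unfold gphi
    rw [mul_assoc, ← Real.exp_add]
    apply mul_le_mul_of_nonneg_left _ (inv_pos.mpr sqrt2pi_pos).le
    apply Real.exp_le_exp.mpr
    nlinarith [sq_nonneg z]
  have hmills := gphi_le_mul_Phibar hq14
  have hεnn : 0 ≤ ε := le_trans (mul_nonneg hz0 hq0) hzq
  have step : Umap θ σ (θ - x) (σ - y) t - t ≤ Real.exp 10 * ε * t := by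
    rw [hU, ← hqt]
    have c1 : Phibar (q - z) - Phibar q ≤ z * (gphi q * Real.exp 0.05) :=
      hdiff.trans (mul_le_mul_of_nonneg_left hgw hz0)
    have c2 : z * (gphi q * Real.exp 0.05)
        ≤ z * ((Real.exp 9 * q * Phibar q) * Real.exp 0.05) := by
      apply mul_le_mul_of_nonneg_left _ hz0
      exact mul_le_mul_of_nonneg_right hmills (Real.exp_pos _).le
    have e3 : z * ((Real.exp 9 * q * Phibar q) * Real.exp 0.05)
        = (Real.exp 9 * Real.exp 0.05) * (z * q) * Phibar q := by ring
    have c3 : (Real.exp 9 * Real.exp 0.05) * (z * q) ≤ Real.exp 10 * ε := by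
      have h1 : Real.exp 9 * Real.exp 0.05 ≤ Real.exp 10 := by
        rw [← Real.exp_add]
        apply Real.exp_le_exp.mpr
        norm_num
      exact mul_le_mul h1 hzq (mul_nonneg hz0 hq0) (Real.exp_pos 10).le
    have c4 : (Real.exp 9 * Real.exp 0.05) * (z * q) * Phibar q
        ≤ Real.exp 10 * ε * Phibar q :=
      mul_le_mul_of_nonneg_right c3 (Phibar_nonneg q)
    calc Phibar (q - z) - Phibar q ≤ z * (gphi q * Real.exp 0.05) := c1
    _ ≤ z * ((Real.exp 9 * q * Phibar q) * Real.exp 0.05) := c2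
    _ = (Real.exp 9 * Real.exp 0.05) * (z * q) * Phibar q := e3
    _ ≤ Real.exp 10 * ε * Phibar q := c4
  rw [div_le_iff₀ ht0]
  exact step
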